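/- arXiv:2603.09751 — 5 statements merged into one kernel-verified Lean document; each statement's English description precedes it below -/
import Mathlib

section
/- The polynomial v(x) = (f0/(12λ⁴))·(6 + 6λx − 3(λx)² − (λx)³), with f0, λ > 0, has exactly one positive root x₀; moreover v(x)>0 for 0 ≤ x < x₀ and v(x)<0 for x > x₀. -/
open Set

private noncomputable def Ppoly : ℝ → ℝ := fun t => 6 + 6 * t - 3 * t ^ 2 - t ^ 3

private lemma Ppoly_anti {a b : ℝ} (ha : 1 ≤ a) (hab : a < b) : Ppoly b < Ppoly a := by
  unfold Ppoly
  nlinarith [sq_nonneg (a + b), sq_nonneg a, sq_nonneg b, mul_pos (lt_of_lt_of_le one_pos ha) (lt_of_lt_of_le one_pos (ha.trans hab.le))]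

private lemma Ppoly_pos {t : ℝ} (h0 : 0 ≤ t) (h1 : t ≤ 1) : 0 < Ppoly t := by
  unfold Ppoly; nlinarith

private lemma Ppoly_root : ∃ t₀ : ℝ, 1 ≤ t₀ ∧ t₀ ≤ 2 ∧ Ppoly t₀ = 0 := by
  have hc : ContinuousOn Ppoly (Icc 1 2) := by
    unfold Ppoly; fun_prop
  have h12 : (1 : ℝ) ≤ 2 := by norm_num
  have := intermediate_value_Icc' h12 hc (a := 1) (b := 2)
  have hmem : (0 : ℝ) ∈ Icc (Ppoly 2) (Ppoly 1) := by
    constructor <;> unfold Ppoly <;> norm_num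
  obtain ⟨t₀, ht₀, hPt₀⟩ := this hmem
  exact ⟨t₀, ht₀.1, ht₀.2, hPt₀⟩

/-- The polynomial velocity v(x) = (f0/(12λ⁴))(6 + 6λx - 3(λx)² - (λx)³) (f0, λ > 0)
has exactly one positive root x₀, is positive on [0, x₀) and negative on (x₀, ∞). -/
theorem stmt_3 (f0 lam : ℝ) (hf0 : 0 < f0) (hlam : 0 < lam)
    (v : ℝ → ℝ)
    (hv : ∀ x, v x = f0 / (12 * lam ^ 4) *
      (6 + 6 * (lam * x) - 3 * (lam * x) ^ 2 - (lam * x) ^ 3)) :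
    ∃ x₀ : ℝ, 0 < x₀ ∧ v x₀ = 0 ∧
      (∀ x : ℝ, 0 ≤ x → x < x₀ → 0 < v x) ∧
      (∀ x : ℝ, x₀ < x → v x < 0) ∧
      (∀ x : ℝ, 0 < x → v x = 0 → x = x₀) := by
  obtain ⟨t₀, ht1, ht2, hroot⟩ := Ppoly_root
  have hc : 0 < f0 / (12 * lam ^ 4) := by positivity
  have hvP : ∀ x, v x = f0 / (12 * lam ^ 4) * Ppoly (lam * x) := by
    intro x; rw [hv x]; rfl
  -- sign of P on [0, t₀) and (t₀, ∞)
  have hPpos : ∀ t, 0 ≤ t → t < t₀ → 0 < Ppoly t := by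
    intro t h0 hlt
    rcases le_or_gt t 1 with h | h
    · exact Ppoly_pos h0 h
    · have := Ppoly_anti h.le hlt
      linarith [hroot ▸ this]
  have hPneg : ∀ t, t₀ < t → Ppoly t < 0 := by
    intro t ht
    have := Ppoly_anti ht1 ht
    linarith [hroot ▸ this]
  refine ⟨t₀ / lam, by positivity, ?_, ?_, ?_, ?_⟩
  · rw [hvP]
    have : lam * (t₀ / lam) = t₀ := by field_simp
    rw [this, hroot, mul_zero]
  · intro x hx0 hxlt
    rw [hvP]
    have hP : 0 < Ppoly (lam * x) := by
      apply hPpos _ (by positivity)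
      calc lam * x < lam * (t₀ / lam) := by exact mul_lt_mul_of_pos_left hxlt hlam
        _ = t₀ := by field_simp
    positivity
  · intro x hx
    rw [hvP]
    have hP : Ppoly (lam * x) < 0 := by
      apply hPneg
      calc t₀ = lam * (t₀ / lam) := by field_simp
        _ < lam * x := mul_lt_mul_of_pos_left hx hlam
    exact mul_neg_of_pos_of_neg hc hP
  · intro x hx0 hvx
    rw [hvP] at hvx
    have hP : Ppoly (lam * x) = 0 := by
      rcases mul_eq_zero.1 hvx with h | h
      · exact absurd h hc.ne'
      · exact h
    by_contra hne
    rcases lt_or_gt_of_ne hne with h | h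
    · have : lam * x < t₀ := by
        calc lam * x < lam * (t₀ / lam) := mul_lt_mul_of_pos_left h hlam
          _ = t₀ := by field_simp
      exact absurd hP (hPpos _ (by positivity) this).ne'
    · have : t₀ < lam * x := by
        calc t₀ = lam * (t₀ / lam) := by field_simp
          _ < lam * x := mul_lt_mul_of_pos_left h hlam
      exact absurd hP (hPneg _ this).ne
end

section
/- Let α > β+2 and define I₁(x) := x^{β−α} ∫₀^{x/2} ( (1−y/x)^β/(x^{-α}+(1−y/x)^α) − 1 )·y^β/(1+y^α) dy. Then x^{α−β+1}·I₁(x) → (α−β)·∫₀^∞ y^{β+1}/(1+y^α) dy as x → ∞. -/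
open MeasureTheory Real Set Filter Topology

private lemma int_aux9 {p q : ℝ} (hp : 0 ≤ p) (hpq : p + 1 < q) :
    IntegrableOn (fun y : ℝ => y ^ p / (1 + y ^ q)) (Ioi 0) := by
  have hq : (0:ℝ) < q := by linarith
  have hmeas : Measurable (fun y : ℝ => y ^ p / (1 + y ^ q)) :=
    (Real.continuous_rpow_const hp).measurable.div
      ((continuous_const.add (Real.continuous_rpow_const hq.le)).measurable)
  have h1 : IntegrableOn (fun y : ℝ => y ^ p / (1 + y ^ q)) (Ioc 0 1) := by
    apply Measure.integrableOn_of_bounded (M := 1) (by simp) hmeas.aestronglyMeasurable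
    filter_upwards [ae_restrict_mem measurableSet_Ioc] with y hy
    have hy0 : (0:ℝ) < y := hy.1
    have h1q : (0:ℝ) < 1 + y ^ q := by positivity
    rw [Real.norm_eq_abs, abs_div, abs_of_nonneg (Real.rpow_nonneg hy0.le p),
      abs_of_pos h1q, div_le_one h1q]
    have h2 : y ^ p ≤ 1 := Real.rpow_le_one hy0.le hy.2 hp
    nlinarith [Real.rpow_nonneg hy0.le q]
  have h2 : IntegrableOn (fun y : ℝ => y ^ p / (1 + y ^ q)) (Ioi 1) := by
    have hint : IntegrableOn (fun y : ℝ => y ^ (p - q)) (Ioi 1) :=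
      integrableOn_Ioi_rpow_of_lt (by linarith) one_pos
    apply hint.mono' hmeas.aestronglyMeasurable
    filter_upwards [ae_restrict_mem measurableSet_Ioi] with y hy
    have hy0 : (0:ℝ) < y := lt_trans one_pos hy
    have h1q : (0:ℝ) < 1 + y ^ q := by positivity
    have hyq : (0:ℝ) < y ^ q := Real.rpow_pos_of_pos hy0 q
    rw [Real.norm_eq_abs, abs_div, abs_of_nonneg (Real.rpow_nonneg hy0.le p),
      abs_of_pos h1q, Real.rpow_sub hy0]
    apply div_le_div_of_nonneg_left (Real.rpow_nonneg hy0.le p) hyq (by linarith)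
  rw [show Ioi (0:ℝ) = Ioc 0 1 ∪ Ioi 1 from (Ioc_union_Ioi_eq_Ioi one_pos.le).symm]
  exact h1.union h2

private lemma lim_aux9 {α β y : ℝ} (hβ : 0 ≤ β) (hα : β + 2 < α) (hy : 0 < y) :
    Tendsto (fun x : ℝ => x * (((1 - y / x) ^ β / (x ^ (-α) + (1 - y / x) ^ α) - 1) *
        (y ^ β / (1 + y ^ α))))
      atTop (𝓝 ((α - β) * (y ^ (β + 1) / (1 + y ^ α)))) := by
  have hα0 : (0:ℝ) < α := by linarith
  have hd : HasDerivAt (fun t : ℝ => (1 - t) ^ β - (1 - t) ^ α) (α - β) 0 := by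
    have hc : HasDerivAt (fun t : ℝ => 1 - t) (-1) 0 := (hasDerivAt_id 0).const_sub 1
    have h1 : HasDerivAt (fun t : ℝ => (1 - t) ^ β) (β * (1:ℝ) ^ (β - 1) * (-1)) 0 := by
      have := (Real.hasDerivAt_rpow_const (x := ((1:ℝ) - 0)) (p := β)
        (Or.inl (by norm_num))).comp 0 hc
      simpa [Function.comp_def] using this
    have h2 : HasDerivAt (fun t : ℝ => (1 - t) ^ α) (α * (1:ℝ) ^ (α - 1) * (-1)) 0 := by
      have := (Real.hasDerivAt_rpow_const (x := ((1:ℝ) - 0)) (p := α)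
        (Or.inl (by norm_num))).comp 0 hc
      simpa [Function.comp_def] using this
    have h3 := h1.sub h2
    have e : β * (1:ℝ) ^ (β - 1) * (-1) - α * (1:ℝ) ^ (α - 1) * (-1) = α - β := by
      simp [Real.one_rpow]; ring
    exact e ▸ h3
  have hslope : Tendsto (fun t : ℝ => ((1 - t) ^ β - (1 - t) ^ α) / t) (𝓝[≠] (0:ℝ))
      (𝓝 (α - β)) := by
    have := hasDerivAt_iff_tendsto_slope.mp hd
    apply this.congr
    intro t
    simp [slope_def_field, Real.one_rpow]
  have htx : Tendsto (fun x : ℝ => y / x) atTop (𝓝[≠] (0:ℝ)) := by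
    apply tendsto_nhdsWithin_of_tendsto_nhds_of_eventually_within
    · exact tendsto_const_nhds.div_atTop tendsto_id
    · filter_upwards [eventually_gt_atTop 0] with x hx
      exact (div_pos hy hx).ne'
  have hnum : Tendsto (fun x : ℝ => x * ((1 - y / x) ^ β - (1 - y / x) ^ α)) atTop
      (𝓝 ((α - β) * y)) := by
    have h := (hslope.comp htx).const_mul y
    rw [mul_comm]
    apply h.congr'
    filter_upwards [eventually_gt_atTop 0] with x hx
    have hx0 : x ≠ 0 := hx.ne'
    simp only [Function.comp_apply]
    field_simp
  have hB : Tendsto (fun x : ℝ => x ^ (-α) + (1 - y / x) ^ α) atTop (𝓝 1) := by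
    have h1 : Tendsto (fun x : ℝ => x ^ (-α)) atTop (𝓝 0) := tendsto_rpow_neg_atTop hα0
    have h2 : Tendsto (fun x : ℝ => (1 - y / x) ^ α) atTop (𝓝 1) := by
      have h3 : Tendsto (fun x : ℝ => 1 - y / x) atTop (𝓝 1) := by
        have hyx : Tendsto (fun x : ℝ => y / x) atTop (𝓝 (0:ℝ)) :=
          tendsto_const_nhds.div_atTop tendsto_id
        simpa using (tendsto_const_nhds (x := (1:ℝ)) (f := atTop)).sub hyx
      have := h3.rpow_const (p := α) (Or.inl one_ne_zero)
      simpa using this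
    simpa using h1.add h2
  have hx1a : Tendsto (fun x : ℝ => x ^ (1 - α)) atTop (𝓝 0) := by
    have := tendsto_rpow_neg_atTop (y := α - 1) (by linarith)
    simpa [neg_sub] using this
  have hq : Tendsto (fun x : ℝ =>
      (x * ((1 - y / x) ^ β - (1 - y / x) ^ α) - x ^ (1 - α)) /
        (x ^ (-α) + (1 - y / x) ^ α)) atTop (𝓝 ((α - β) * y)) := by
    have := (hnum.sub hx1a).div hB one_ne_zero
    simpa [Pi.div_def] using this
  have hfinal := hq.mul_const (y ^ β / (1 + y ^ α))
  have heq : (α - β) * y * (y ^ β / (1 + y ^ α)) = (α - β) * (y ^ (β + 1) / (1 + y ^ α)) := by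
    rw [Real.rpow_add_one hy.ne' β]
    ring
  rw [heq] at hfinal
  apply hfinal.congr'
  filter_upwards [eventually_gt_atTop (2 * y)] with x hx
  have hx0 : (0:ℝ) < x := by nlinarith
  have ht : y / x < 1 / 2 := by rw [div_lt_div_iff₀ hx0 two_pos]; nlinarith
  have hu0 : (0:ℝ) < 1 - y / x := by linarith [div_pos hy hx0]
  have hB0 : (0:ℝ) < x ^ (-α) + (1 - y / x) ^ α :=
    add_pos (Real.rpow_pos_of_pos hx0 _) (Real.rpow_pos_of_pos hu0 _)
  have hxa : x ^ (1 - α) = x * x ^ (-α) := by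
    rw [show (1 - α) = 1 + (-α) by ring, Real.rpow_add hx0, Real.rpow_one]
  have key : ∀ (A D c R x : ℝ), c + D ≠ 0 →
      ((x * (A - D) - x * c) / (c + D)) * R = x * ((A / (c + D) - 1) * R) := by
    intros A D c R x h
    field_simp
    ring
  rw [hxa]
  exact key _ _ _ _ _ hB0.ne'

/-- For α > β + 2, β ≥ 0, the deviation term
I₁(x) = x^{β-α} ∫₀^{x/2} ((1-y/x)^β/(x^{-α}+(1-y/x)^α) - 1) y^β/(1+y^α) dy
satisfies x^{α-β+1} I₁(x) → (α-β) ∫₀^∞ y^{β+1}/(1+y^α) dy as x → ∞. -/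
theorem stmt_9 (α β : ℝ) (hβ : 0 ≤ β) (hα : β + 2 < α) :
    Tendsto (fun x : ℝ =>
        x ^ (α - β + 1) *
          (x ^ (β - α) * ∫ y in (0:ℝ)..(x / 2),
            ((1 - y / x) ^ β / (x ^ (-α) + (1 - y / x) ^ α) - 1) *
              (y ^ β / (1 + y ^ α))))
      atTop (nhds ((α - β) * ∫ y in Ioi (0:ℝ), y ^ (β + 1) / (1 + y ^ α))) := by
  have hα0 : (0:ℝ) < α := by linarith
  have hα1 : (1:ℝ) ≤ α := by linarith
  have hβα : β < α := by linarith
  set g : ℝ → ℝ → ℝ := fun x y =>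
    x * (((1 - y / x) ^ β / (x ^ (-α) + (1 - y / x) ^ α) - 1) * (y ^ β / (1 + y ^ α)))
    with hg
  set F : ℝ → ℝ → ℝ := fun x => (Ioc (0:ℝ) (x / 2)).indicator (g x) with hF
  -- measurability
  have hmeas : ∀ x : ℝ, AEStronglyMeasurable (F x) (volume.restrict (Ioi 0)) := by
    intro x
    have h1 : Continuous fun y : ℝ => (1 - y / x) ^ β :=
      (Real.continuous_rpow_const hβ).comp (continuous_const.sub (continuous_id.div_const x))
    have h2 : Continuous fun y : ℝ => x ^ (-α) + (1 - y / x) ^ α :=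
      continuous_const.add ((Real.continuous_rpow_const hα0.le).comp
        (continuous_const.sub (continuous_id.div_const x)))
    have h3 : Continuous fun y : ℝ => y ^ β := Real.continuous_rpow_const hβ
    have h4 : Continuous fun y : ℝ => 1 + y ^ α :=
      continuous_const.add (Real.continuous_rpow_const hα0.le)
    have hm : Measurable (g x) :=
      measurable_const.mul (((h1.measurable.div h2.measurable).sub measurable_const).mul
        (h3.measurable.div h4.measurable))
    exact (hm.indicator measurableSet_Ioc).aestronglyMeasurable
  -- the bound
  have hbound : ∀ x : ℝ, 1 ≤ x → ∀ y : ℝ, y ∈ Ioc 0 (x / 2) →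
      ‖g x y‖ ≤ 2 ^ α * (α * y + 1) * (y ^ β / (1 + y ^ α)) := by
    intro x hx1 y hy
    have hx0 : (0:ℝ) < x := lt_of_lt_of_le one_pos hx1
    have hy0 : (0:ℝ) < y := hy.1
    have ht0 : (0:ℝ) < y / x := div_pos hy0 hx0
    have ht : y / x ≤ 1 / 2 := by
      rw [div_le_div_iff₀ hx0 two_pos]; linarith [hy.2]
    have hu_half : 1 / 2 ≤ 1 - y / x := by linarith
    have hu0 : (0:ℝ) < 1 - y / x := by linarith
    have hu1 : 1 - y / x ≤ 1 := by linarith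
    have hcx : (0:ℝ) < x ^ (-α) := Real.rpow_pos_of_pos hx0 _
    have hB0 : (0:ℝ) < x ^ (-α) + (1 - y / x) ^ α :=
      add_pos hcx (Real.rpow_pos_of_pos hu0 _)
    have hR0 : (0:ℝ) ≤ y ^ β / (1 + y ^ α) := by positivity
    have hnumb : |(1 - y / x) ^ β - (x ^ (-α) + (1 - y / x) ^ α)| ≤ α * (y / x) + x ^ (-α) := by
      rw [abs_le]
      constructor
      · have h1 : (1 - y / x) ^ α ≤ (1 - y / x) ^ β :=
          Real.rpow_le_rpow_of_exponent_ge hu0 hu1 hβα.le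
        have h5 : 0 ≤ α * (y / x) := by positivity
        linarith
      · have h2 : (1 - y / x) ^ β ≤ 1 := Real.rpow_le_one hu0.le hu1 hβ
        have h3 : 1 - α * (y / x) ≤ (1 - y / x) ^ α := by
          have := one_add_mul_self_le_rpow_one_add (s := -(y / x)) (by linarith) hα1
          have e : (1:ℝ) + -(y / x) = 1 - y / x := by ring
          rw [e] at this
          linarith
        linarith
    have hBlow : (2:ℝ) ^ (-α) ≤ x ^ (-α) + (1 - y / x) ^ α := by
      have e : ((1:ℝ) / 2) ^ α = (2:ℝ) ^ (-α) := by
        rw [one_div, Real.inv_rpow (by norm_num : (0:ℝ) ≤ 2),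
          ← Real.rpow_neg (by norm_num : (0:ℝ) ≤ 2)]
      have h5 : ((1:ℝ) / 2) ^ α ≤ (1 - y / x) ^ α :=
        Real.rpow_le_rpow (by norm_num) hu_half hα0.le
      rw [e] at h5
      linarith
    have habs : |(1 - y / x) ^ β / (x ^ (-α) + (1 - y / x) ^ α) - 1|
        ≤ (α * (y / x) + x ^ (-α)) * 2 ^ α := by
      rw [div_sub_one hB0.ne', abs_div, abs_of_pos hB0]
      calc |(1 - y / x) ^ β - (x ^ (-α) + (1 - y / x) ^ α)| / (x ^ (-α) + (1 - y / x) ^ α)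
          ≤ (α * (y / x) + x ^ (-α)) / 2 ^ (-α) :=
            div_le_div₀ (by positivity) hnumb (Real.rpow_pos_of_pos two_pos _) hBlow
        _ = (α * (y / x) + x ^ (-α)) * 2 ^ α := by
            rw [div_eq_mul_inv, ← Real.rpow_neg (by norm_num : (0:ℝ) ≤ 2), neg_neg]
    have h6 : x * |(1 - y / x) ^ β / (x ^ (-α) + (1 - y / x) ^ α) - 1|
        ≤ 2 ^ α * (α * y + 1) := by
      have h8 : x * x ^ (-α) ≤ 1 := by
        have e2 : x * x ^ (-α) = x ^ (1 - α) := by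
          rw [show (1 - α) = 1 + (-α) by ring, Real.rpow_add hx0, Real.rpow_one]
        rw [e2]
        exact Real.rpow_le_one_of_one_le_of_nonpos hx1 (by linarith)
      have h2pos : (0:ℝ) ≤ (2:ℝ) ^ α := Real.rpow_nonneg (by norm_num) _
      calc x * |(1 - y / x) ^ β / (x ^ (-α) + (1 - y / x) ^ α) - 1|
          ≤ x * ((α * (y / x) + x ^ (-α)) * 2 ^ α) :=
            mul_le_mul_of_nonneg_left habs hx0.le
        _ = 2 ^ α * (α * y + x * x ^ (-α)) := by
            field_simp
        _ ≤ 2 ^ α * (α * y + 1) := by nlinarith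
    show ‖x * (((1 - y / x) ^ β / (x ^ (-α) + (1 - y / x) ^ α) - 1) * (y ^ β / (1 + y ^ α)))‖
      ≤ 2 ^ α * (α * y + 1) * (y ^ β / (1 + y ^ α))
    rw [Real.norm_eq_abs, abs_mul, abs_mul, abs_of_pos hx0, abs_of_nonneg hR0, ← mul_assoc]
    exact mul_le_mul_of_nonneg_right h6 hR0
  -- integrable bound
  have hCint : Integrable (fun y : ℝ => 2 ^ α * (α * y + 1) * (y ^ β / (1 + y ^ α)))
      (volume.restrict (Ioi 0)) := by
    have i1 : IntegrableOn (fun y : ℝ => y ^ (β + 1) / (1 + y ^ α)) (Ioi 0) :=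
      int_aux9 (by linarith) (by linarith)
    have i2 : IntegrableOn (fun y : ℝ => y ^ β / (1 + y ^ α)) (Ioi 0) :=
      int_aux9 hβ (by linarith)
    have h := (i1.const_mul (2 ^ α * α)).add (i2.const_mul (2 ^ α))
    apply h.congr
    filter_upwards [ae_restrict_mem measurableSet_Ioi] with y hy
    have hyb : y ^ (β + 1) = y ^ β * y := Real.rpow_add_one (ne_of_gt hy) β
    simp only [Pi.add_apply]
    rw [hyb]
    ring
  -- dominated convergence
  have key : Tendsto (fun x => ∫ y in Ioi (0:ℝ), F x y) atTop
      (𝓝 (∫ y in Ioi (0:ℝ), (α - β) * (y ^ (β + 1) / (1 + y ^ α)))) := by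
    apply tendsto_integral_filter_of_dominated_convergence
      (fun y : ℝ => 2 ^ α * (α * y + 1) * (y ^ β / (1 + y ^ α)))
      (Eventually.of_forall hmeas)
    · filter_upwards [eventually_ge_atTop 1] with x hx1
      filter_upwards [ae_restrict_mem measurableSet_Ioi] with y hy
      by_cases hmem : y ∈ Ioc (0:ℝ) (x / 2)
      · rw [hF]
        simp only [indicator_of_mem hmem]
        exact hbound x hx1 y hmem
      · rw [hF]
        simp only [indicator_of_notMem hmem, norm_zero]
        have hy0 : (0:ℝ) < y := hy
        positivity
    · exact hCint
    · filter_upwards [ae_restrict_mem measurableSet_Ioi] with y hy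
      have hy0 : (0:ℝ) < y := hy
      have hlim := lim_aux9 (α := α) (β := β) hβ hα hy0
      apply hlim.congr'
      filter_upwards [eventually_ge_atTop (2 * y)] with x hx
      have hmem : y ∈ Ioc (0:ℝ) (x / 2) := ⟨hy0, by linarith⟩
      simp only [hF, indicator_of_mem hmem, hg]
  rw [MeasureTheory.integral_const_mul] at key
  apply key.congr'
  filter_upwards [eventually_gt_atTop 0] with x hx
  have hx2 : (0:ℝ) ≤ x / 2 := by linarith
  have e1 : ∫ y in Ioi (0:ℝ), F x y
      = ∫ y in Ioc (0:ℝ) (x / 2), g x y := by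
    rw [hF, integral_indicator measurableSet_Ioc, Measure.restrict_restrict measurableSet_Ioc,
      inter_eq_self_of_subset_left Ioc_subset_Ioi_self]
  have e2 : ∫ y in Ioc (0:ℝ) (x / 2), g x y
      = x * ∫ y in Ioc (0:ℝ) (x / 2),
          ((1 - y / x) ^ β / (x ^ (-α) + (1 - y / x) ^ α) - 1) * (y ^ β / (1 + y ^ α)) := by
    rw [hg]
    exact MeasureTheory.integral_const_mul _ _
  have e3 : (∫ y in (0:ℝ)..(x / 2),
      ((1 - y / x) ^ β / (x ^ (-α) + (1 - y / x) ^ α) - 1) * (y ^ β / (1 + y ^ α)))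
      = ∫ y in Ioc (0:ℝ) (x / 2),
          ((1 - y / x) ^ β / (x ^ (-α) + (1 - y / x) ^ α) - 1) * (y ^ β / (1 + y ^ α)) :=
    intervalIntegral.integral_of_le hx2
  rw [e1, e2, e3, ← mul_assoc, ← Real.rpow_add hx,
    show (α - β + 1) + (β - α) = 1 by ring, Real.rpow_one]
end

section
/- Let v ∈ C¹([0,∞)) with v(x)=(x₀−x)w(x), w ∈ C¹, w>0 on [0,∞), x₀>0, and let M > 0. Define G(x,y) := exp(−M ∫_y^x z/v(z) dz) for x,y on the same side of x₀ (both in [0,x₀) or both in (x₀,∞)). Then there exists a strictly positive continuous function G₀ on (ℝ⁺)² such that G(x,y) = G₀(x,y)·|x−x₀|^c / |y−x₀|^c with c = M·x₀/w(x₀). -/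
open MeasureTheory Real Set

/-- Singularity structure of the Green's kernel G(x,y) = exp(-M ∫_y^x z/v(z) dz) for
v(x) = (x₀-x) w(x), w ∈ C¹ positive: there is a strictly positive continuous G₀ with
G(x,y) = G₀(x,y) |x-x₀|^c / |y-x₀|^c, c = M x₀ / w(x₀), whenever x, y ≥ 0 lie on the
same side of x₀. -/
theorem stmt_11 (x₀ M : ℝ) (hx₀ : 0 < x₀) (hM : 0 < M)
    (w v : ℝ → ℝ) (hw : ContDiffOn ℝ 1 w (Ici 0))
    (hwpos : ∀ x ∈ Ici (0:ℝ), 0 < w x)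
    (hv : ∀ x, v x = (x₀ - x) * w x) :
    ∃ G₀ : ℝ → ℝ → ℝ,
      ContinuousOn (fun p : ℝ × ℝ => G₀ p.1 p.2) (Ici 0 ×ˢ Ici 0) ∧
      (∀ x ∈ Ici (0:ℝ), ∀ y ∈ Ici (0:ℝ), 0 < G₀ x y) ∧
      ∀ x y : ℝ, 0 ≤ x → 0 ≤ y →
        ((x < x₀ ∧ y < x₀) ∨ (x₀ < x ∧ x₀ < y)) →
        Real.exp (-M * ∫ z in y..x, z / v z)
          = G₀ x y * |x - x₀| ^ (M * x₀ / w x₀) / |y - x₀| ^ (M * x₀ / w x₀) := by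
  have hw0 : 0 < w x₀ := hwpos x₀ hx₀.le
  have hw0' : w x₀ ≠ 0 := hw0.ne'
  set c' : ℝ := x₀ / w x₀ with hc'
  set L : ℝ := (x₀ * deriv w x₀ - w x₀) / (w x₀)^2 with hLdef
  set g : ℝ → ℝ := fun z => z / ((x₀ - z) * w z) - c' * (x₀ - z)⁻¹ with hgdef
  set r : ℝ → ℝ := fun z => if z = x₀ then L else g z with hrdef
  set r' : ℝ → ℝ := fun z => r (max z 0) with hr'def
  have hwc : ContinuousOn w (Ici 0) := hw.continuousOn
  have hwd : DifferentiableAt ℝ w x₀ :=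
    (hw.differentiableOn one_ne_zero).differentiableAt (Ici_mem_nhds hx₀)
  have hwcx : ContinuousAt w x₀ := hwd.continuousAt
  -- the key limit at x₀
  have hN : HasDerivAt (fun z => z * w x₀ - x₀ * w z) (w x₀ - x₀ * deriv w x₀) x₀ := by
    have h1 : HasDerivAt (fun z : ℝ => z * w x₀) (1 * w x₀) x₀ :=
      (hasDerivAt_id x₀).mul_const (w x₀)
    have h2 : HasDerivAt (fun z : ℝ => x₀ * w z) (x₀ * deriv w x₀) x₀ :=
      hwd.hasDerivAt.const_mul x₀
    have h3 := h1.sub h2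
    rw [one_mul] at h3
    exact h3
  have hslope : Filter.Tendsto (slope (fun z => z * w x₀ - x₀ * w z) x₀) (nhdsWithin x₀ {x₀}ᶜ)
      (nhds (w x₀ - x₀ * deriv w x₀)) := hasDerivAt_iff_tendsto_slope.mp hN
  have htend : Filter.Tendsto r (nhdsWithin x₀ {x₀}ᶜ) (nhds L) := by
    have haux : Filter.Tendsto
        (fun z => -(slope (fun z => z * w x₀ - x₀ * w z) x₀ z) * (w z * w x₀)⁻¹)
        (nhdsWithin x₀ {x₀}ᶜ) (nhds (-(w x₀ - x₀ * deriv w x₀) * (w x₀ * w x₀)⁻¹)) := by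
      apply Filter.Tendsto.mul hslope.neg
      apply Filter.Tendsto.inv₀
      · exact ((hwcx.tendsto.mono_left nhdsWithin_le_nhds).mul tendsto_const_nhds)
      · exact (mul_pos hw0 hw0).ne'
    have hval : -(w x₀ - x₀ * deriv w x₀) * (w x₀ * w x₀)⁻¹ = L := by
      rw [hLdef]; field_simp; ring
    rw [hval] at haux
    apply haux.congr'
    have hpos : ∀ᶠ z in nhdsWithin x₀ {x₀}ᶜ, 0 < z :=
      eventually_nhdsWithin_of_eventually_nhds (Filter.Tendsto.eventually_const_lt hx₀ Filter.tendsto_id)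
    filter_upwards [hpos, self_mem_nhdsWithin] with z hz hzne
    have hzne' : z ≠ x₀ := hzne
    have hxz : x₀ - z ≠ 0 := sub_ne_zero.mpr (Ne.symm hzne')
    have hzx : z - x₀ ≠ 0 := sub_ne_zero.mpr hzne'
    have hwz : w z ≠ 0 := (hwpos z hz.le).ne'
    rw [hrdef]
    simp only [if_neg hzne', hgdef, slope_def_field]
    rw [hc']
    field_simp
    ring
  have hrx₀ : r x₀ = L := by rw [hrdef]; simp
  have hatx₀ : ContinuousAt r x₀ := by
    unfold ContinuousAt
    rw [hrx₀, ← nhdsNE_sup_pure x₀]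
    exact htend.sup (by rw [← hrx₀]; exact tendsto_pure_nhds r x₀)
  have hrcont : ContinuousOn r (Ici 0) := by
    intro z hz
    by_cases hzx : z = x₀
    · subst hzx; exact hatx₀.continuousWithinAt
    · have hxz : x₀ - z ≠ 0 := sub_ne_zero.mpr (Ne.symm hzx)
      have hwz : w z ≠ 0 := (hwpos z hz).ne'
      have hgc : ContinuousWithinAt g (Ici 0) z := by
        apply ContinuousWithinAt.sub
        · exact continuousWithinAt_id.div
            ((continuousWithinAt_const.sub continuousWithinAt_id).mul (hwc z hz))
            (mul_ne_zero hxz hwz)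
        · exact continuousWithinAt_const.mul
            ((continuousWithinAt_const.sub continuousWithinAt_id).inv₀ hxz)
      apply hgc.congr_of_eventuallyEq
      · filter_upwards [mem_nhdsWithin_of_mem_nhds (isOpen_ne.mem_nhds hzx)] with u hu
        rw [hrdef]; simp only [if_neg hu]
      · rw [hrdef]; simp only [if_neg hzx]
  have hr'cont : Continuous r' :=
    hrcont.comp_continuous (continuous_id.max continuous_const) (fun z => le_max_right z 0)
  set F : ℝ → ℝ := fun t => ∫ s in (0:ℝ)..t, r' s with hFdef
  have hint : ∀ a b : ℝ, IntervalIntegrable r' volume a b :=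
    fun a b => hr'cont.intervalIntegrable a b
  have hFcont : Continuous F := intervalIntegral.continuous_primitive hint 0
  refine ⟨fun x y => Real.exp (-M * (F x - F y)), ?_, ?_, ?_⟩
  · apply Continuous.continuousOn
    exact (Real.continuous_exp.comp
      (continuous_const.mul ((hFcont.comp continuous_fst).sub (hFcont.comp continuous_snd))))
  · intro x _ y _; exact Real.exp_pos _
  · intro x y hx hy hside
    have hxne : x ≠ x₀ := by rcases hside with ⟨h1, _⟩ | ⟨h1, _⟩ <;> [exact h1.ne; exact h1.ne']
    have hyne : y ≠ x₀ := by rcases hside with ⟨_, h2⟩ | ⟨_, h2⟩ <;> [exact h2.ne; exact h2.ne']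
    -- all points of the interval are ≥ 0 and ≠ x₀
    have hmem : ∀ z ∈ uIcc y x, 0 ≤ z ∧ z ≠ x₀ := by
      intro z hz
      rw [mem_uIcc] at hz
      constructor
      · rcases hz with ⟨h, _⟩ | ⟨h, _⟩ <;> [exact le_trans hy h; exact le_trans hx h]
      · rcases hside with ⟨h1, h2⟩ | ⟨h1, h2⟩
        · rcases hz with ⟨_, h⟩ | ⟨_, h⟩ <;> [exact (lt_of_le_of_lt h h1).ne; exact (lt_of_le_of_lt h h2).ne]
        · rcases hz with ⟨h, _⟩ | ⟨h, _⟩ <;> [exact (lt_of_lt_of_le h2 h).ne'; exact (lt_of_lt_of_le h1 h).ne']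
    -- rewrite the integrand
    have hco : ∫ z in y..x, z / v z = ∫ z in y..x, (c' * (x₀ - z)⁻¹ + r' z) := by
      apply intervalIntegral.integral_congr
      intro z hz
      obtain ⟨h0, hne⟩ := hmem z hz
      have hwz : w z ≠ 0 := (hwpos z h0).ne'
      have hxz : x₀ - z ≠ 0 := sub_ne_zero.mpr (Ne.symm hne)
      rw [hr'def]
      simp only [max_eq_left h0, hrdef, if_neg hne, hgdef, hv]
      ring
    have h1int : IntervalIntegrable (fun z => c' * (x₀ - z)⁻¹) volume y x := by
      apply ContinuousOn.intervalIntegrable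
      apply continuousOn_const.mul
      apply ContinuousOn.inv₀
      · exact (continuousOn_const.sub continuousOn_id)
      · intro z hz
        exact sub_ne_zero.mpr (Ne.symm (hmem z hz).2)
    have hsplit : ∫ z in y..x, (c' * (x₀ - z)⁻¹ + r' z)
        = c' * (∫ z in y..x, (x₀ - z)⁻¹) + (F x - F y) := by
      rw [intervalIntegral.integral_add h1int (hint y x),
        intervalIntegral.integral_const_mul,
        intervalIntegral.integral_interval_sub_left (hint 0 x) (hint 0 y)]
    have h0notin : (0:ℝ) ∉ uIcc (x₀ - x) (x₀ - y) := by
      rcases hside with ⟨h1, h2⟩ | ⟨h1, h2⟩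
      · exact notMem_uIcc_of_lt (by linarith) (by linarith)
      · exact notMem_uIcc_of_gt (by linarith) (by linarith)
    have hlog : ∫ z in y..x, (x₀ - z)⁻¹ = Real.log ((x₀ - y) / (x₀ - x)) := by
      rw [intervalIntegral.integral_comp_sub_left (fun u => u⁻¹) x₀]
      exact integral_inv h0notin
    have hQpos : 0 < (x₀ - y) / (x₀ - x) := by
      rcases hside with ⟨h1, h2⟩ | ⟨h1, h2⟩
      · exact div_pos (by linarith) (by linarith)
      · exact div_pos_of_neg_of_neg (by linarith) (by linarith)
    have hQinv : ((x₀ - y) / (x₀ - x))⁻¹ = |x - x₀| / |y - x₀| := by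
      rcases hside with ⟨h1, h2⟩ | ⟨h1, h2⟩
      · rw [abs_of_neg (by linarith : x - x₀ < 0), abs_of_neg (by linarith : y - x₀ < 0),
          neg_sub, neg_sub, inv_div]
      · rw [abs_of_pos (by linarith : 0 < x - x₀), abs_of_pos (by linarith : 0 < y - x₀),
          inv_div, ← neg_div_neg_eq, neg_sub, neg_sub]
    have hc : M * x₀ / w x₀ = M * c' := by rw [hc']; ring
    rw [hco, hsplit, hlog, hc]
    have hexp : -M * (c' * Real.log ((x₀ - y) / (x₀ - x)) + (F x - F y))
        = -M * (F x - F y) + (M * c') * Real.log (((x₀ - y) / (x₀ - x))⁻¹) := by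
      rw [Real.log_inv]; ring
    have hpow : Real.exp (M * c' * Real.log (((x₀ - y) / (x₀ - x))⁻¹))
        = |x - x₀| ^ (M * c') / |y - x₀| ^ (M * c') := by
      rw [mul_comm (M * c'), ← Real.rpow_def_of_pos (inv_pos.mpr hQpos), hQinv,
        Real.div_rpow (abs_nonneg _) (abs_nonneg _)]
    rw [hexp, Real.exp_add, hpow]
    ring
end

section
/- Let β > 2, δ := β/2 − 1, A > 0, x̄ > x₀ > 0, J > 0, M₁ > 0, m := min_{[0,x₀/2]} w > 0. Suppose f ≥ 0 satisfies f(x) ≤ J/((x₀−x)w(x)) on [0,x₀/2], ∫₀^∞ x f dx ≤ M₁, and f(x) ≤ J/(A x^β) for x ≥ x̄. Then ∫₀^∞ x^{1+δ} f(x) dx ≤ J(x₀/2)^{β/2}/m + x̄^{β/2−1} M₁ + J·x̄^{1−β/2}/(A(β/2−1)), in particular this (1+δ)-moment is finite and bounded independently of any regularization parameter. -/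
open MeasureTheory Real Set

/-- Uniform higher-moment bound: for β > 2, δ = β/2 - 1, if f ≥ 0 is bounded by
J/((x₀-x)w(x)) on [0,x₀/2] (with w ≥ m > 0 there), by J/(A x^β) for x ≥ x̄ > x₀,
and has first moment at most M₁, then
∫₀^∞ x^{1+δ} f dx ≤ J(x₀/2)^{β/2}/m + x̄^{β/2-1} M₁ + J x̄^{1-β/2}/(A(β/2-1)). -/
theorem stmt_15 (x₀ J M₁ m A β δ xbar : ℝ) (hx₀ : 0 < x₀) (hJ : 0 < J)
    (hM₁ : 0 < M₁) (hm : 0 < m) (hA : 0 < A) (hβ : 2 < β) (hδ : δ = β / 2 - 1)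
    (hxbar : x₀ < xbar) (w f : ℝ → ℝ)
    (hmmin : ∀ x ∈ Icc (0:ℝ) (x₀ / 2), m ≤ w x)
    (hmeas : Measurable f) (hfpos : ∀ x, 0 ≤ f x)
    (hb1 : ∀ x ∈ Icc (0:ℝ) (x₀ / 2), f x ≤ J / ((x₀ - x) * w x))
    (hb2 : ∀ x : ℝ, xbar ≤ x → f x ≤ J / (A * x ^ β))
    (hM : ∫⁻ x in Ioi (0:ℝ), ENNReal.ofReal (x * f x) ≤ ENNReal.ofReal M₁) :
    ∫⁻ x in Ioi (0:ℝ), ENNReal.ofReal (x ^ (1 + δ) * f x)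
      ≤ ENNReal.ofReal (J * (x₀ / 2) ^ (β / 2) / m + xbar ^ (β / 2 - 1) * M₁
          + J * xbar ^ (1 - β / 2) / (A * (β / 2 - 1))) := by
  have hxb : (0:ℝ) < xbar := hx₀.trans hxbar
  have hc : (0:ℝ) < x₀ / 2 := by linarith
  have hcx : x₀ / 2 ≤ xbar := by linarith
  have hβ2 : (0:ℝ) < β / 2 - 1 := by linarith
  have h1δ : 1 + δ = β / 2 := by rw [hδ]; ring
  -- split the integral
  have hsplit1 : Ioc (0:ℝ) (x₀/2) ∪ Ioi (x₀/2) = Ioi (0:ℝ) :=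
    Ioc_union_Ioi_eq_Ioi hc.le
  have hsplit2 : Ioc (x₀/2) xbar ∪ Ioi xbar = Ioi (x₀/2) :=
    Ioc_union_Ioi_eq_Ioi hcx
  set g : ℝ → ENNReal := fun x => ENNReal.ofReal (x ^ (1 + δ) * f x) with hg
  have key : ∫⁻ x in Ioi (0:ℝ), g x
      = (∫⁻ x in Ioc (0:ℝ) (x₀/2), g x) + (∫⁻ x in Ioc (x₀/2) xbar, g x)
        + ∫⁻ x in Ioi xbar, g x := by
    rw [← hsplit1, lintegral_union measurableSet_Ioi (Ioc_disjoint_Ioi le_rfl),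
      ← hsplit2, lintegral_union measurableSet_Ioi (Ioc_disjoint_Ioi le_rfl), add_assoc]
  rw [key]
  -- term 1
  have h1 : (∫⁻ x in Ioc (0:ℝ) (x₀/2), g x)
      ≤ ENNReal.ofReal (J * (x₀ / 2) ^ (β / 2) / m) := by
    have hb : ∀ x ∈ Ioc (0:ℝ) (x₀/2),
        g x ≤ ENNReal.ofReal ((x₀/2) ^ (β/2) * (J / ((x₀/2) * m))) := by
      intro x hx
      apply ENNReal.ofReal_le_ofReal
      have hx0 : 0 ≤ x := hx.1.le
      have hxI : x ∈ Icc (0:ℝ) (x₀/2) := ⟨hx0, hx.2⟩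
      have h1 : x ^ (1+δ) ≤ (x₀/2) ^ (β/2) := by
        rw [h1δ]; exact rpow_le_rpow hx0 hx.2 (by linarith)
      have h2 : f x ≤ J / ((x₀/2) * m) := by
        refine (hb1 x hxI).trans ?_
        have hd : (x₀/2) * m ≤ (x₀ - x) * w x := by
          have h3 := hmmin x hxI
          have h4 : x₀/2 ≤ x₀ - x := by linarith [hx.2]
          nlinarith
        exact div_le_div_of_nonneg_left hJ.le (by positivity) hd
      exact mul_le_mul h1 h2 (hfpos x) (by positivity)
    calc ∫⁻ x in Ioc (0:ℝ) (x₀/2), g x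
        ≤ ∫⁻ _ in Ioc (0:ℝ) (x₀/2),
            ENNReal.ofReal ((x₀/2) ^ (β/2) * (J / ((x₀/2) * m))) :=
          setLIntegral_mono_ae (by fun_prop) (Filter.Eventually.of_forall hb)
      _ = ENNReal.ofReal ((x₀/2) ^ (β/2) * (J / ((x₀/2) * m))) * ENNReal.ofReal (x₀/2) := by
          rw [setLIntegral_const, Real.volume_Ioc]; norm_num
      _ = ENNReal.ofReal (J * (x₀ / 2) ^ (β / 2) / m) := by
          rw [← ENNReal.ofReal_mul (by positivity)]
          congr 1
          field_simp
  -- term 2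
  have h2 : (∫⁻ x in Ioc (x₀/2) xbar, g x)
      ≤ ENNReal.ofReal (xbar ^ (β / 2 - 1) * M₁) := by
    have hb : ∀ x ∈ Ioc (x₀/2) xbar,
        g x ≤ ENNReal.ofReal (xbar ^ (β/2-1)) * ENNReal.ofReal (x * f x) := by
      intro x hx
      rw [← ENNReal.ofReal_mul (by positivity)]
      apply ENNReal.ofReal_le_ofReal
      have hx0 : 0 < x := hc.trans hx.1
      have hr : x ^ (1+δ) = x ^ (β/2-1) * x := by
        rw [show (1:ℝ) + δ = (β/2-1) + 1 by rw [hδ]; ring, rpow_add_one hx0.ne']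
      rw [hr]
      have : x ^ (β/2-1) ≤ xbar ^ (β/2-1) := rpow_le_rpow hx0.le hx.2 hβ2.le
      nlinarith [hfpos x, mul_nonneg hx0.le (hfpos x), rpow_nonneg hx0.le (β/2-1)]
    calc ∫⁻ x in Ioc (x₀/2) xbar, g x
        ≤ ∫⁻ x in Ioc (x₀/2) xbar,
            ENNReal.ofReal (xbar ^ (β/2-1)) * ENNReal.ofReal (x * f x) :=
          setLIntegral_mono_ae (by fun_prop) (Filter.Eventually.of_forall hb)
      _ ≤ ∫⁻ x in Ioi (0:ℝ),
            ENNReal.ofReal (xbar ^ (β/2-1)) * ENNReal.ofReal (x * f x) :=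
          lintegral_mono_set (fun x hx => hc.trans hx.1)
      _ = ENNReal.ofReal (xbar ^ (β/2-1)) * ∫⁻ x in Ioi (0:ℝ), ENNReal.ofReal (x * f x) :=
          lintegral_const_mul' _ _ ENNReal.ofReal_ne_top
      _ ≤ ENNReal.ofReal (xbar ^ (β/2-1)) * ENNReal.ofReal M₁ :=
          mul_le_mul_right hM _
      _ = ENNReal.ofReal (xbar ^ (β / 2 - 1) * M₁) := by
          rw [← ENNReal.ofReal_mul (by positivity)]
  -- term 3
  have h3 : (∫⁻ x in Ioi xbar, g x)
      ≤ ENNReal.ofReal (J * xbar ^ (1 - β / 2) / (A * (β / 2 - 1))) := by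
    have hb : ∀ x ∈ Ioi xbar, g x ≤ ENNReal.ofReal (J / A * x ^ (-(β/2))) := by
      intro x hx
      apply ENNReal.ofReal_le_ofReal
      have hx0 : 0 < x := hxb.trans hx
      have h2 : f x ≤ J / (A * x ^ β) := hb2 x hx.le
      have h1 : x ^ (1+δ) * f x ≤ x ^ (β/2) * (J / (A * x ^ β)) := by
        rw [h1δ]
        exact mul_le_mul_of_nonneg_left h2 (rpow_nonneg hx0.le _)
      refine h1.trans_eq ?_
      rw [show -(β/2) = β/2 - β by ring, rpow_sub hx0]
      field_simp
    have hint : IntegrableOn (fun x => J / A * x ^ (-(β/2))) (Ioi xbar) := by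
      exact (integrableOn_Ioi_rpow_of_lt (by linarith) hxb).const_mul _
    calc ∫⁻ x in Ioi xbar, g x
        ≤ ∫⁻ x in Ioi xbar, ENNReal.ofReal (J / A * x ^ (-(β/2))) :=
          setLIntegral_mono_ae (by fun_prop) (Filter.Eventually.of_forall hb)
      _ = ENNReal.ofReal (∫ x in Ioi xbar, J / A * x ^ (-(β/2))) := by
          rw [← ofReal_integral_eq_lintegral_ofReal hint]
          refine ae_restrict_of_forall_mem measurableSet_Ioi fun x hx => ?_
          have hx0 : 0 < x := hxb.trans hx
          positivity
      _ = ENNReal.ofReal (J * xbar ^ (1 - β / 2) / (A * (β / 2 - 1))) := by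
          congr 1
          rw [integral_const_mul, integral_Ioi_rpow_of_lt (by linarith) hxb,
            show -(β/2) + 1 = 1 - β/2 by ring]
          have h5 : 1 - β/2 ≠ 0 := by intro h; linarith
          field_simp
          rw [show (2:ℝ)-β = -(β-2) by ring, div_neg]
          ring
  calc (∫⁻ x in Ioc (0:ℝ) (x₀/2), g x) + (∫⁻ x in Ioc (x₀/2) xbar, g x)
        + ∫⁻ x in Ioi xbar, g x
      ≤ ENNReal.ofReal (J * (x₀ / 2) ^ (β / 2) / m) + ENNReal.ofReal (xbar ^ (β / 2 - 1) * M₁)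
        + ENNReal.ofReal (J * xbar ^ (1 - β / 2) / (A * (β / 2 - 1))) := by
        gcongr
    _ = ENNReal.ofReal (J * (x₀ / 2) ^ (β / 2) / m + xbar ^ (β / 2 - 1) * M₁
          + J * xbar ^ (1 - β / 2) / (A * (β / 2 - 1))) := by
        rw [← ENNReal.ofReal_add (by positivity) (by positivity),
          ← ENNReal.ofReal_add (by positivity) (by positivity)]
end

section
/- Let K : Fin (J+1) → Fin (J+1) → ℝ be symmetric (K_{i,j} = K_{j,i}) and let f : Fin (J+1) → ℝ, Δx > 0, x_j := j·Δx. Define Q_j := (Δx/2)·Σ_{i=0}^{j} K_{j−i,i} f_{j−i} f_i − Δx·Σ_{i=0}^{J−j} K_{j,i} f_j f_i. Then Σ_{j=0}^{J} x_j Q_j = 0. -/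
open Finset

lemma stmt16_key (J : ℕ) (g : ℕ → ℕ → ℝ) :
    ∑ j ∈ range (J+1), ∑ i ∈ range (j+1), g (j-i) i
      = ∑ j ∈ range (J+1), ∑ i ∈ range (J-j+1), g j i := by
  rw [Finset.sum_sigma', Finset.sum_sigma']
  apply Finset.sum_nbij' (fun p => ⟨p.1 - p.2, p.2⟩) (fun p => ⟨p.1 + p.2, p.2⟩) <;>
    simp only [Finset.mem_sigma, Finset.mem_range] <;> intro a ha <;>
    obtain ⟨j, i⟩ := a <;> simp_all <;> omega

lemma stmt16_swap (J : ℕ) (g : ℕ → ℕ → ℝ) :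
    ∑ j ∈ range (J+1), ∑ i ∈ range (J-j+1), g j i
      = ∑ j ∈ range (J+1), ∑ i ∈ range (J-j+1), g i j := by
  rw [Finset.sum_sigma', Finset.sum_sigma']
  apply Finset.sum_nbij' (fun p => ⟨p.2, p.1⟩) (fun p => ⟨p.2, p.1⟩) <;>
    simp only [Finset.mem_sigma, Finset.mem_range] <;> intro a ha <;>
    obtain ⟨j, i⟩ := a <;> simp_all <;> omega

/-- The discretized Smoluchowski coagulation operator
Q_j = (Δx/2) Σ_{i=0}^{j} K_{j-i,i} f_{j-i} f_i - Δx Σ_{i=0}^{J-j} K_{j,i} f_j f_i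
conserves the discrete first moment: Σ_{j=0}^{J} x_j Q_j = 0, x_j = jΔx,
for any symmetric kernel K. -/
theorem stmt_16 (J : ℕ) (Δx : ℝ) (hΔx : 0 < Δx) (K : ℕ → ℕ → ℝ) (f : ℕ → ℝ)
    (hsym : ∀ i j, K i j = K j i) :
    ∑ j ∈ Finset.range (J + 1), ((j : ℝ) * Δx) *
      ((Δx / 2) * (∑ i ∈ Finset.range (j + 1), K (j - i) i * f (j - i) * f i)
        - Δx * (∑ i ∈ Finset.range (J - j + 1), K j i * f j * f i)) = 0 := by
  set g : ℕ → ℕ → ℝ := fun a b => ((a : ℝ) + b) * (K a b * f a * f b) with hg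
  have h1 : ∑ j ∈ range (J+1), (j : ℝ) * ∑ i ∈ range (j+1), K (j-i) i * f (j-i) * f i
      = ∑ j ∈ range (J+1), ∑ i ∈ range (J-j+1), g j i := by
    rw [← stmt16_key J g]
    refine Finset.sum_congr rfl fun j hj => ?_
    rw [Finset.mul_sum]
    refine Finset.sum_congr rfl fun i hi => ?_
    simp only [Finset.mem_range] at hi
    have : (j - i : ℕ) + i = j := by omega
    simp only [hg]
    have hc : ((j - i : ℕ) : ℝ) + (i : ℝ) = (j : ℝ) := by
      rw [← Nat.cast_add, this]
    rw [hc]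
  have h2 : 2 * ∑ j ∈ range (J+1), (j : ℝ) * ∑ i ∈ range (J-j+1), K j i * f j * f i
      = ∑ j ∈ range (J+1), ∑ i ∈ range (J-j+1), g j i := by
    have hA : ∑ j ∈ range (J+1), (j : ℝ) * ∑ i ∈ range (J-j+1), K j i * f j * f i
        = ∑ j ∈ range (J+1), ∑ i ∈ range (J-j+1), (j : ℝ) * (K j i * f j * f i) := by
      simp [Finset.mul_sum]
    have hB : ∑ j ∈ range (J+1), ∑ i ∈ range (J-j+1), (j : ℝ) * (K j i * f j * f i)
        = ∑ j ∈ range (J+1), ∑ i ∈ range (J-j+1), (i : ℝ) * (K j i * f j * f i) := by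
      rw [stmt16_swap J (fun a b => (a : ℝ) * (K a b * f a * f b))]
      refine Finset.sum_congr rfl fun j _ => Finset.sum_congr rfl fun i _ => ?_
      rw [hsym i j]; ring
    rw [hA, two_mul]
    nth_rewrite 1 [hB]
    rw [← Finset.sum_add_distrib]
    refine Finset.sum_congr rfl fun j _ => ?_
    rw [← Finset.sum_add_distrib]
    refine Finset.sum_congr rfl fun i _ => ?_
    simp [hg]; ring
  have expand : ∑ j ∈ Finset.range (J + 1), ((j : ℝ) * Δx) *
      ((Δx / 2) * (∑ i ∈ Finset.range (j + 1), K (j - i) i * f (j - i) * f i)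
        - Δx * (∑ i ∈ Finset.range (J - j + 1), K j i * f j * f i))
      = (Δx * Δx / 2) * (∑ j ∈ range (J+1), (j:ℝ) * ∑ i ∈ range (j+1), K (j-i) i * f (j-i) * f i)
        - (Δx * Δx) * (∑ j ∈ range (J+1), (j:ℝ) * ∑ i ∈ range (J-j+1), K j i * f j * f i) := by
    rw [Finset.mul_sum, Finset.mul_sum, ← Finset.sum_sub_distrib]
    refine Finset.sum_congr rfl fun j _ => ?_
    ring
  rw [expand, h1, ← h2]
  ring
end
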